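/- Assume K has characteristic 0 and let r ≥ 1 be an integer. With the hyperplane-section setup (points P_1, …, P_n in the hyperplane H: x_0 = 0 of P^{N+1}, with I their radical ideal in K[x_1, …, x_{N+1}] and Î their radical ideal in K[x_0, …, x_{N+1}]): if I^{(rN−(N−1))} ⊆ M^{(r−1)(N−1)} I^r, then Î^{(r(N+1)−N)} ⊆ M̂^{(r−1)N} Î^r. -/

import Mathlib

open MvPolynomial

noncomputable section

/-- The ideal generated by all homogeneous forms vanishing at the point with
coordinate vector `p`. -/
def homVanishingIdeal {K σ : Type*} [Field K] (p : σ → K) : Ideal (MvPolynomial σ K) :=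
  Ideal.span {F : MvPolynomial σ K | (∃ d, F.IsHomogeneous d) ∧ MvPolynomial.eval p F = 0}

/-- The `m`-th symbolic power of the radical ideal of the finite set of points
with coordinate vectors `P i`: the intersection of the `m`-th powers of the
ideals of the individual points. -/
def symbPow {K σ ι : Type*} [Field K] (P : ι → σ → K) (m : ℕ) : Ideal (MvPolynomial σ K) :=
  ⨅ i, homVanishingIdeal (P i) ^ m

/-- The irrelevant maximal ideal `M = (x_0, …, x_N)`. -/
def irrel (K σ : Type*) [Field K] : Ideal (MvPolynomial σ K) :=
  Ideal.span (Set.range (MvPolynomial.X : σ → MvPolynomial σ K))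

/-- The coordinate vectors `P i` are nonzero and represent pairwise distinct
points of projective space (no two are proportional). -/
def ProjectivelyDistinct {K σ ι : Type*} [Field K] (P : ι → σ → K) : Prop :=
  (∀ i, P i ≠ 0) ∧ Pairwise fun i j => ∀ c : K, P i ≠ c • P j

/-- `α(J)`: the least degree of a nonzero homogeneous element of `J`. -/
def idealAlpha {K σ : Type*} [Field K] (J : Ideal (MvPolynomial σ K)) : ℕ :=
  sInf {d : ℕ | ∃ F ∈ J, F ≠ 0 ∧ MvPolynomial.IsHomogeneous F d}
namespace Stmt15Aux

variable {K : Type*} [Field K] {σ : Type*}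

attribute [local instance] MvPolynomial.gradedAlgebra

lemma hvi_homog (p : σ → K) :
    Ideal.IsHomogeneous (homogeneousSubmodule σ K) (homVanishingIdeal p) :=
  Ideal.homogeneous_span _ _ (fun _ hx => hx.1)

lemma isHomog_pow {A : Ideal (MvPolynomial σ K)}
    (hA : A.IsHomogeneous (homogeneousSubmodule σ K)) (m : ℕ) :
    (A ^ m).IsHomogeneous (homogeneousSubmodule σ K) := by
  induction m with
  | zero => simpa [pow_zero, Ideal.one_eq_top] using Ideal.IsHomogeneous.top _
  | succ m ih => rw [pow_succ]; exact ih.mul hA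

lemma homogComp_mem {A : Ideal (MvPolynomial σ K)}
    (hA : A.IsHomogeneous (homogeneousSubmodule σ K)) {f} (hf : f ∈ A) (e : ℕ) :
    homogeneousComponent e f ∈ A := by
  have h2 := hA e hf
  rwa [show ((DirectSum.decompose (homogeneousSubmodule σ K) f e : MvPolynomial σ K))
      = homogeneousComponent e f from MvPolynomial.decomposition.decompose'_apply f e] at h2

lemma monomial_mem_irrel {u : σ →₀ ℕ} (hu : u ≠ 0) (c : K) :
    monomial u c ∈ irrel K σ := by
  classical
  obtain ⟨i, hi⟩ : ∃ i, u i ≠ 0 := by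
    by_contra hc
    push_neg at hc
    exact hu (Finsupp.ext fun j => hc j)
  have huv : Finsupp.single i 1 + (u - Finsupp.single i 1) = u := by
    ext j
    rcases eq_or_ne j i with rfl | hj
    · simp only [Finsupp.add_apply, Finsupp.single_eq_same, Finsupp.tsub_apply]
      omega
    · simp [Finsupp.add_apply, Finsupp.single_eq_of_ne hj, Finsupp.tsub_apply]
  have key : monomial u c = X i * monomial (u - Finsupp.single i 1) c := by
    rw [X, monomial_mul, one_mul, huv]
  rw [key]
  exact Ideal.mul_mem_right _ _ (Ideal.subset_span ⟨i, rfl⟩)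

lemma hvi_le_irrel (p : σ → K) : homVanishingIdeal p ≤ irrel K σ := by
  rw [homVanishingIdeal, Ideal.span_le]
  rintro g ⟨⟨d, hd⟩, hev⟩
  rw [g.as_sum]
  refine Ideal.sum_mem _ fun u hu => ?_
  rcases eq_or_ne u 0 with rfl | hu0
  · -- degree-0 part: contradiction with eval = 0
    exfalso
    have hd0 : d = 0 := by
      have := hd (mem_support_iff.mp hu); simpa using this.symm
    have hsupp : g.support ⊆ {0} := by
      intro v hv
      have hw := hd (mem_support_iff.mp hv)
      rw [hd0] at hw
      have : v.degree = 0 := by rw [Finsupp.degree_eq_weight_one]; exact hw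
      simpa [Finset.mem_singleton] using (Finsupp.degree_eq_zero_iff v).mp this
    have hsupp' : g.support = {0} := Finset.Subset.antisymm hsupp (Finset.singleton_subset_iff.mpr hu)
    have : eval p g = coeff 0 g := by
      rw [eval_eq, hsupp', Finset.sum_singleton]
      simp
    rw [hev] at this
    exact mem_support_iff.mp hu this.symm
  · exact monomial_mem_irrel hu0 _

lemma const_irrel_eq_zero {c : K} (h : (C c : MvPolynomial σ K) ∈ irrel K σ) : c = 0 := by
  have hker : irrel K σ ≤ RingHom.ker (eval (fun _ => (0 : K))) := by
    rw [irrel, Ideal.span_le]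
    rintro _ ⟨i, rfl⟩
    simp [RingHom.mem_ker]
  have := hker h
  simpa [RingHom.mem_ker] using this

lemma pderiv_mem_pow [DecidableEq σ] {A : Ideal (MvPolynomial σ K)} (i : σ) :
    ∀ (m : ℕ) (f : MvPolynomial σ K), f ∈ A ^ (m + 1) → pderiv i f ∈ A ^ m := by
  intro m
  induction m with
  | zero => intro f _; simp only [pow_zero, Ideal.one_eq_top]; exact Submodule.mem_top
  | succ m ih =>
    intro f hf
    rw [pow_succ] at hf
    refine Submodule.mul_induction_on hf (fun a ha b hb => ?_) (fun x y hx hy => ?_)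
    · have h1 : pderiv i a * b ∈ A ^ (m + 1) := by
        rw [pow_succ]; exact Ideal.mul_mem_mul (ih a ha) hb
      have h2 : a * pderiv i b ∈ A ^ (m + 1) := Ideal.mul_mem_right _ _ ha
      rw [pderiv_mul]
      exact Ideal.add_mem _ h1 h2
    · rw [map_add]
      exact Ideal.add_mem _ hx hy

lemma euler [Fintype σ] [DecidableEq σ] {f : MvPolynomial σ K} {d : ℕ}
    (hf : f.IsHomogeneous d) : ∑ i : σ, X i * pderiv i f = d • f := by
  have hmono : ∀ (u : σ →₀ ℕ) (c : K) (i : σ),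
      X i * pderiv i (monomial u c) = monomial u ((u i : K) * c) := by
    intro u c i
    rw [pderiv_monomial]
    rcases eq_or_ne (u i) 0 with h0 | h0
    · simp [h0]
    · have huv : Finsupp.single i 1 + (u - Finsupp.single i 1) = u := by
        ext j
        rcases eq_or_ne j i with rfl | hj
        · simp only [Finsupp.add_apply, Finsupp.single_eq_same, Finsupp.tsub_apply]
          omega
        · simp [Finsupp.add_apply, Finsupp.single_eq_of_ne hj, Finsupp.tsub_apply]
      rw [X, monomial_mul, one_mul, mul_comm c, huv]
  calc ∑ i : σ, X i * pderiv i f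
      = ∑ i : σ, ∑ u ∈ f.support, X i * pderiv i (monomial u (coeff u f)) := by
        refine Finset.sum_congr rfl fun i _ => ?_
        conv_lhs => rw [f.as_sum]
        rw [map_sum, Finset.mul_sum]
    _ = ∑ u ∈ f.support, ∑ i : σ, X i * pderiv i (monomial u (coeff u f)) := Finset.sum_comm
    _ = ∑ u ∈ f.support, d • monomial u (coeff u f) := by
        refine Finset.sum_congr rfl fun u hu => ?_
        simp_rw [hmono]
        have hsum : (∑ i : σ, (u i : K)) = (d : K) := by
          have h1 : (Finsupp.weight 1 u : ℕ) = d := hf (mem_support_iff.mp hu)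
          have h2 : u.degree = d := by rw [Finsupp.degree_eq_weight_one]; exact h1
          have h3 : ∑ i : σ, u i = d := by
            rw [← h2, Finsupp.degree]
            exact (Finset.sum_subset (Finset.subset_univ _)
              (fun x _ hx => Finsupp.notMem_support_iff.mp hx)).symm
          rw [← h3]
          push_cast
          ring
        rw [← map_sum, ← Finset.sum_mul, hsum, ← nsmul_eq_mul, map_nsmul]
    _ = d • f := by rw [← Finset.smul_sum, ← f.as_sum]

lemma mem_symbPow {ι : Type*} {P : ι → σ → K} {m : ℕ} {f : MvPolynomial σ K} :
    f ∈ symbPow P m ↔ ∀ i, f ∈ homVanishingIdeal (P i) ^ m :=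
  Submodule.mem_iInf _

lemma step [Fintype σ] [DecidableEq σ] [CharZero K] {ι : Type*} [Nonempty ι]
    (P : ι → σ → K) (m : ℕ) :
    symbPow P (m + 1) ≤ irrel K σ * symbPow P m := by
  intro f hf
  have hhom : Ideal.IsHomogeneous (homogeneousSubmodule σ K) (symbPow P (m + 1)) :=
    Ideal.IsHomogeneous.iInf fun i => isHomog_pow (hvi_homog _) _
  rw [← f.sum_homogeneousComponent]
  refine Ideal.sum_mem _ fun e _ => ?_
  have hgmem : homogeneousComponent e f ∈ symbPow P (m + 1) := homogComp_mem hhom hf e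
  have hghom : (homogeneousComponent e f).IsHomogeneous e :=
    homogeneousComponent_isHomogeneous e f
  set g := homogeneousComponent e f with hgdef
  rcases Nat.eq_zero_or_pos e with rfl | he
  · have hC : g = C (coeff 0 f) := homogeneousComponent_zero f
    have h1 : g ∈ irrel K σ := by
      have h2 := mem_symbPow.mp hgmem (Classical.arbitrary ι)
      exact hvi_le_irrel _ (Ideal.pow_le_self (Nat.succ_ne_zero m) h2)
    rw [hC] at h1
    have : coeff 0 f = 0 := const_irrel_eq_zero h1
    rw [hC, this, map_zero]
    exact Ideal.zero_mem _
  · have hder : ∀ i : σ, pderiv i g ∈ symbPow P m := by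
      intro i
      refine mem_symbPow.mpr fun j => ?_
      exact pderiv_mem_pow i m g (mem_symbPow.mp hgmem j)
    have he' : ((e : K)) ≠ 0 := Nat.cast_ne_zero.mpr (Nat.pos_iff_ne_zero.mp he)
    have heq : g = C ((e : K)⁻¹) * ∑ i : σ, X i * pderiv i g := by
      rw [euler hghom, ← Nat.cast_smul_eq_nsmul K, smul_eq_C_mul, ← mul_assoc, ← C_mul,
        inv_mul_cancel₀ he', C_1, one_mul]
    rw [heq]
    refine Ideal.mul_mem_left _ _ (Ideal.sum_mem _ fun i _ => ?_)
    exact Ideal.mul_mem_mul (Ideal.subset_span ⟨i, rfl⟩) (hder i)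

lemma iter_step [Fintype σ] [DecidableEq σ] [CharZero K] {ι : Type*} [Nonempty ι]
    (P : ι → σ → K) (t : ℕ) : ∀ m : ℕ,
    symbPow P (m + t) ≤ (irrel K σ) ^ t * symbPow P m := by
  induction t with
  | zero => intro m; simp
  | succ t ih =>
    intro m
    have h1 : symbPow P (m + (t + 1)) ≤ irrel K σ * symbPow P (m + t) := by
      have := step P (m + t)
      rwa [show m + (t + 1) = (m + t) + 1 by omega]
    refine h1.trans ?_
    refine (Ideal.mul_mono_right (ih m)).trans ?_
    rw [← mul_assoc, ← pow_succ']


lemma symbPow_def {ι : Type*} (P : ι → σ → K) (m : ℕ) :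
    symbPow P m = ⨅ i, homVanishingIdeal (P i) ^ m := rfl

end Stmt15Aux

namespace Stmt15Aux

variable {K : Type*} [Field K] {n : ℕ}

lemma degree_fintype {α : Type*} [Fintype α] (v : α →₀ ℕ) : v.degree = ∑ j : α, v j := by
  rw [Finsupp.degree]
  exact Finset.sum_subset (Finset.subset_univ _)
    (fun x _ hx => Finsupp.notMem_support_iff.mp hx)

lemma weight_one_cons (k : ℕ) (u : Fin n →₀ ℕ) :
    (Finsupp.weight 1 (Finsupp.cons k u) : ℕ) = k + Finsupp.weight 1 u := by
  rw [show (Finsupp.weight 1 : (Fin (n + 1) →₀ ℕ) →+ ℕ) = Finsupp.weight (fun _ => 1) from rfl,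
    show (Finsupp.weight 1 : (Fin n →₀ ℕ) →+ ℕ) = Finsupp.weight (fun _ => 1) from rfl,
    ← Finsupp.degree_eq_weight_one, ← Finsupp.degree_eq_weight_one,
    degree_fintype, degree_fintype, Fin.sum_univ_succ]
  simp [Finsupp.cons_zero, Finsupp.cons_succ]

lemma fse_rename (a : MvPolynomial (Fin n) K) :
    finSuccEquiv K n (rename Fin.succ a) = Polynomial.C a := by
  induction a using MvPolynomial.induction_on with
  | C c => rw [rename_C]; simp [finSuccEquiv_apply]
  | add p q hp hq => rw [map_add, map_add, hp, hq, map_add]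
  | mul_X p i hp => rw [map_mul, map_mul, hp, rename_X, finSuccEquiv_X_succ, map_mul]

lemma coeff_mem_one {p : Fin (n + 1) → K} (hp : p 0 = 0) {F : MvPolynomial (Fin (n + 1)) K}
    (hF : F ∈ homVanishingIdeal p) :
    (finSuccEquiv K n F).coeff 0 ∈ homVanishingIdeal (fun j => p (Fin.succ j)) := by
  rw [homVanishingIdeal] at hF
  induction hF using Submodule.span_induction with
  | mem g hg =>
    obtain ⟨⟨d, hd⟩, hev⟩ := hg
    refine Ideal.subset_span ⟨⟨d, ?_⟩, ?_⟩
    · intro u hu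
      rw [finSuccEquiv_coeff_coeff] at hu
      have h2 := hd hu
      have h3 := weight_one_cons 0 u
      rw [h2] at h3
      simpa using h3.symm
    · have hcons : (Fin.cons (0 : K) (fun j => p (Fin.succ j)) : Fin (n + 1) → K) = p := by
        funext j
        refine Fin.cases ?_ ?_ j
        · rw [Fin.cons_zero]; exact hp.symm
        · intro i; rw [Fin.cons_succ]
      have heval := eval_eq_eval_mv_eval' (fun j => p (Fin.succ j)) 0 g
      rw [hcons, hev, ← Polynomial.coeff_zero_eq_eval_zero, Polynomial.coeff_map] at heval
      exact heval.symm
  | zero => rw [map_zero, Polynomial.coeff_zero]; exact Ideal.zero_mem _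
  | add x y hx hy ihx ihy =>
    rw [map_add, Polynomial.coeff_add]; exact Ideal.add_mem _ ihx ihy
  | smul a x hx ihx =>
    rw [smul_eq_mul, map_mul, Polynomial.mul_coeff_zero]
    exact Ideal.mul_mem_left _ _ ihx

lemma coeff_mem {p : Fin (n + 1) → K} (hp : p 0 = 0) :
    ∀ (m : ℕ) (F : MvPolynomial (Fin (n + 1)) K), F ∈ homVanishingIdeal p ^ m → ∀ k : ℕ,
      (finSuccEquiv K n F).coeff k ∈ homVanishingIdeal (fun j => p (Fin.succ j)) ^ (m - k) := by
  intro m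
  induction m with
  | zero => intro F _ k; rw [Nat.zero_sub, pow_zero, Ideal.one_eq_top]; exact Submodule.mem_top
  | succ m ih =>
    intro F hF k
    rw [pow_succ] at hF
    refine Submodule.mul_induction_on
      (C := fun (G : MvPolynomial (Fin (n + 1)) K) => ∀ k : ℕ,
        (finSuccEquiv K n G).coeff k
          ∈ homVanishingIdeal (fun j => p (Fin.succ j)) ^ (m + 1 - k))
      hF ?_ ?_ k
    · intro a ha b hb k'
      rw [map_mul, Polynomial.coeff_mul]
      refine Ideal.sum_mem _ fun x hx => ?_
      have hxy := Finset.HasAntidiagonal.mem_antidiagonal.mp hx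
      have h1 := ih a ha x.1
      have h2 : (finSuccEquiv K n b).coeff x.2
          ∈ homVanishingIdeal (fun j => p (Fin.succ j)) ^ (1 - x.2) := by
        match hx2 : x.2 with
        | 0 => rw [pow_one]; exact coeff_mem_one hp hb
        | (j + 1) =>
          rw [Nat.succ_sub_succ, Nat.zero_sub, pow_zero, Ideal.one_eq_top]
          exact Submodule.mem_top
      have h3 := Ideal.mul_mem_mul h1 h2
      rw [← pow_add] at h3
      exact Ideal.pow_le_pow_right (by omega) h3
    · intro x y hx hy k'
      rw [map_add, Polynomial.coeff_add]
      exact Ideal.add_mem _ (hx k') (hy k')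

lemma recon (F : MvPolynomial (Fin (n + 1)) K) :
    F = ∑ k ∈ Finset.range ((finSuccEquiv K n F).natDegree + 1),
        rename Fin.succ ((finSuccEquiv K n F).coeff k) * X 0 ^ k := by
  have h0 : F = (finSuccEquiv K n).symm (finSuccEquiv K n F) :=
    (AlgEquiv.symm_apply_apply _ _).symm
  conv_lhs => rw [h0, (finSuccEquiv K n F).as_sum_range]
  rw [map_sum]
  refine Finset.sum_congr rfl fun k _ => ?_
  rw [← Polynomial.C_mul_X_pow_eq_monomial, map_mul, map_pow]
  congr 1
  · exact (AlgEquiv.symm_apply_eq _).mpr (fse_rename _).symm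
  · congr 1
    exact (AlgEquiv.symm_apply_eq _).mpr finSuccEquiv_X_zero.symm

lemma map_hvi_le (p : Fin (n + 1) → K) :
    Ideal.map (rename Fin.succ : MvPolynomial (Fin n) K →ₐ[K] MvPolynomial (Fin (n + 1)) K)
      (homVanishingIdeal (fun j => p (Fin.succ j))) ≤ homVanishingIdeal p := by
  rw [homVanishingIdeal, Ideal.map_span, Ideal.span_le]
  rintro _ ⟨g, ⟨⟨d, hd⟩, hev⟩, rfl⟩
  refine Ideal.subset_span ⟨⟨d, hd.rename_isHomogeneous⟩, ?_⟩
  rw [eval_rename]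
  exact hev

lemma map_irrel_le :
    Ideal.map (rename Fin.succ : MvPolynomial (Fin n) K →ₐ[K] MvPolynomial (Fin (n + 1)) K)
      (irrel K (Fin n)) ≤ irrel K (Fin (n + 1)) := by
  rw [irrel, Ideal.map_span, Ideal.span_le]
  rintro _ ⟨_, ⟨i, rfl⟩, rfl⟩
  rw [rename_X]
  exact Ideal.subset_span ⟨i.succ, rfl⟩

lemma map_sp1_le {ι : Type*} (P : ι → Fin (n + 1) → K) :
    Ideal.map (rename Fin.succ : MvPolynomial (Fin n) K →ₐ[K] MvPolynomial (Fin (n + 1)) K)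
      (symbPow (fun i (j : Fin n) => P i (Fin.succ j)) 1) ≤ symbPow P 1 := by
  rw [symbPow_def P]
  refine le_iInf fun i => ?_
  have h1 : symbPow (fun i (j : Fin n) => P i (Fin.succ j)) 1
      ≤ homVanishingIdeal (fun j => P i (Fin.succ j)) ^ 1 := by
    rw [symbPow_def]; exact iInf_le _ i
  refine le_trans (Ideal.map_mono h1) ?_
  rw [pow_one, pow_one]
  exact map_hvi_le (P i)

end Stmt15Aux

open Stmt15Aux

/-- Hyperplane section, char 0.  If `I^{(rN-(N-1))} ⊆ M^{(r-1)(N-1)} I^r`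
in `K[x_1,…,x_{N+1}]`, then `Î^{(r(N+1)-N)} ⊆ M̂^{(r-1)N} Î^r` in `K[x_0,…,x_{N+1}]`. -/
theorem stmt15 {K : Type*} [Field K] [IsAlgClosed K] [CharZero K]
    {N n : ℕ} (hN : 1 ≤ N) (hn : 1 ≤ n)
    (P : Fin n → (Fin (N + 2) → K)) (hP : ProjectivelyDistinct P)
    (hinH : ∀ i, P i 0 = 0)
    (r : ℕ) (hr : 1 ≤ r)
    (h : symbPow (fun i (j : Fin (N + 1)) => P i j.succ) (r * N - (N - 1)) ≤
      irrel K (Fin (N + 1)) ^ ((r - 1) * (N - 1)) *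
        symbPow (fun i (j : Fin (N + 1)) => P i j.succ) 1 ^ r) :
    symbPow P (r * (N + 1) - N) ≤
      irrel K (Fin (N + 2)) ^ ((r - 1) * N) * symbPow P 1 ^ r := by
  classical
  haveI : Nonempty (Fin n) := ⟨⟨0, hn⟩⟩
  obtain ⟨N', rfl⟩ : ∃ N', N = N' + 1 := ⟨N - 1, by omega⟩
  obtain ⟨r', rfl⟩ : ∃ r', r = r' + 1 := ⟨r - 1, by omega⟩
  simp only [Nat.add_sub_cancel] at h ⊢
  have hm0 : (r' + 1) * (N' + 1) - N' = r' * N' + r' + 1 := by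
    have hx : (r' + 1) * (N' + 1) = (r' * N' + r' + 1) + N' := by ring
    omega
  have hmhat : (r' + 1) * (N' + 1 + 1) - (N' + 1) = r' * N' + 2 * r' + 1 := by
    have hx : (r' + 1) * (N' + 1 + 1) = (r' * N' + 2 * r' + 1) + (N' + 1) := by ring
    omega
  have he1 : r' * (N' + 1) = r' * N' + r' := by ring
  rw [hm0] at h
  rw [hmhat, he1]
  intro F hF
  rw [recon F]
  refine Ideal.sum_mem _ fun k _ => ?_
  set f := (finSuccEquiv K (N' + 1 + 1) F).coeff k with hfdef
  have hk : ∀ i : Fin n, f ∈ homVanishingIdeal (fun j => P i (Fin.succ j))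
      ^ (r' * N' + 2 * r' + 1 - k) :=
    fun i => coeff_mem (hinH i) _ F (mem_symbPow.mp hF i) k
  have hX0M : (X 0 : MvPolynomial (Fin (N' + 1 + 2)) K) ∈ irrel K (Fin (N' + 1 + 2)) :=
    Ideal.subset_span ⟨0, rfl⟩
  have hX0I : (X 0 : MvPolynomial (Fin (N' + 1 + 2)) K) ∈ symbPow P 1 := by
    refine mem_symbPow.mpr fun i => ?_
    rw [pow_one]
    exact Ideal.subset_span ⟨⟨1, isHomogeneous_X _ _⟩, by rw [eval_X]; exact hinH i⟩
  rcases lt_or_ge k (r' + 1) with hcase | hcase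
  · -- small k
    set t := r' - k with ht
    have hsub : r' * N' + 2 * r' + 1 - k = (r' * N' + r' + 1) + t := by omega
    have hf1 : f ∈ symbPow (fun i (j : Fin (N' + 1 + 1)) => P i j.succ)
        ((r' * N' + r' + 1) + t) := by
      refine mem_symbPow.mpr fun i => ?_
      rw [← hsub]
      exact hk i
    have hf2 := iter_step (fun i (j : Fin (N' + 1 + 1)) => P i j.succ) t (r' * N' + r' + 1) hf1
    have hf3 := Ideal.mul_mono_right h hf2
    rw [← mul_assoc, ← pow_add] at hf3
    have hf4 := Ideal.mem_map_of_mem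
      (rename Fin.succ :
        MvPolynomial (Fin (N' + 1 + 1)) K →ₐ[K] MvPolynomial (Fin (N' + 1 + 2)) K) hf3
    rw [Ideal.map_mul, Ideal.map_pow, Ideal.map_pow] at hf4
    have hf5 : rename Fin.succ f ∈
        irrel K (Fin (N' + 1 + 2)) ^ (t + r' * N') * symbPow P 1 ^ (r' + 1) :=
      Ideal.mul_mono (Ideal.pow_right_mono map_irrel_le _)
        (Ideal.pow_right_mono (map_sp1_le P) _) hf4
    have h6 := Ideal.mul_mem_mul hf5 (Ideal.pow_mem_pow hX0M k)
    rw [mul_right_comm, ← pow_add] at h6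
    have hexp : t + r' * N' + k = r' * N' + r' := by omega
    rwa [hexp] at h6
  · rcases le_or_gt (r' * N' + 2 * r' + 1) k with hbig | hmid
    · -- very large k
      have he : (k - (r' * N' + 2 * r' + 1)) + ((r' * N' + r') + (r' + 1)) = k := by omega
      have hsplit : rename Fin.succ f * X 0 ^ k =
          ((rename Fin.succ f * X 0 ^ (k - (r' * N' + 2 * r' + 1)))
            * X 0 ^ (r' * N' + r')) * X 0 ^ (r' + 1) := by
        rw [mul_assoc, mul_assoc, ← pow_add, ← pow_add, he]
      rw [hsplit]
      exact Ideal.mul_mem_mul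
        (Ideal.mul_mem_left _ _ (Ideal.pow_mem_pow hX0M _)) (Ideal.pow_mem_pow hX0I _)
    · -- middle k
      have hfM : f ∈ irrel K (Fin (N' + 1 + 1)) ^ (r' * N' + 2 * r' + 1 - k) :=
        Ideal.pow_right_mono (hvi_le_irrel _) _ (hk ⟨0, hn⟩)
      have hf2 := Ideal.mem_map_of_mem
        (rename Fin.succ :
          MvPolynomial (Fin (N' + 1 + 1)) K →ₐ[K] MvPolynomial (Fin (N' + 1 + 2)) K) hfM
      rw [Ideal.map_pow] at hf2
      have hf3 : rename Fin.succ f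
          ∈ irrel K (Fin (N' + 1 + 2)) ^ (r' * N' + 2 * r' + 1 - k) :=
        Ideal.pow_right_mono map_irrel_le _ hf2
      have he : k - (r' + 1) + (r' + 1) = k := by omega
      have hsplit : rename Fin.succ f * X 0 ^ k =
          (rename Fin.succ f * X 0 ^ (k - (r' + 1))) * X 0 ^ (r' + 1) := by
        rw [mul_assoc, ← pow_add, he]
      rw [hsplit]
      refine Ideal.mul_mem_mul ?_ (Ideal.pow_mem_pow hX0I _)
      have h4 := Ideal.mul_mem_mul hf3 (Ideal.pow_mem_pow hX0M (k - (r' + 1)))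
      rw [← pow_add] at h4
      have hexp : (r' * N' + 2 * r' + 1 - k) + (k - (r' + 1)) = r' * N' + r' := by omega
      rwa [hexp] at h4
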